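/- Let X be a metric space, let f_1, ..., f_N : X → X be continuous maps with Hutchinson operator F, and suppose the induced map F : H(X) → H(X) is continuous with respect to the Hausdorff metric. Let A and B be nonempty compact subsets of X such that the iterates F^k(B) converge to A in the Hausdorff metric, and set Ã = ⋂_{K≥1} closure(⋃_{k≥K} F^k(B)). Then à is a nonempty compact set satisfying F(Ã) = Ã. -/

import Mathlib

open Metric Filter TopologicalSpace
open scoped Topology

/-- Let `F` be the Hutchinson operator of an IFS of continuous maps whose induced map on the
space `H(X)` of nonempty compact subsets (with the Hausdorff metric) is continuous. If `A`
and `B` are nonempty compact subsets of `X` with `F^[k] B → A` in the Hausdorff metric, then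
`Ã = ⋂_{K ≥ 1} closure (⋃_{k ≥ K} F^[k] B)` is a nonempty compact set with `F Ã = Ã`. -/
theorem tail_intersection_invariant {X : Type*} [MetricSpace X] {N : ℕ} (hN : 0 < N)
    (f : Fin N → X → X) (hf : ∀ i, Continuous (f i))
    (F : Set X → Set X) (hF : ∀ S : Set X, F S = ⋃ i, f i '' S)
    (FH : NonemptyCompacts X → NonemptyCompacts X)
    (hFH : ∀ B : NonemptyCompacts X, (FH B : Set X) = F (B : Set X))
    (hcont : Continuous FH)
    (A B : Set X) (hA : A.Nonempty) (hAc : IsCompact A)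
    (hB : B.Nonempty) (hBc : IsCompact B)
    (hconv : Tendsto (fun k => hausdorffDist (F^[k] B) A) atTop (𝓝 0))
    (Atilde : Set X) (hAtilde : Atilde = ⋂ K ≥ 1, closure (⋃ k ≥ K, F^[k] B)) :
    Atilde.Nonempty ∧ IsCompact Atilde ∧ F Atilde = Atilde := by
  set B' : NonemptyCompacts X := ⟨⟨B, hBc⟩, hB⟩ with hB'
  set A' : NonemptyCompacts X := ⟨⟨A, hAc⟩, hA⟩ with hA'
  set C : ℕ → NonemptyCompacts X := fun k => FH^[k] B' with hC
  have hCk : ∀ k, (C k : Set X) = F^[k] B := by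
    intro k
    induction k with
    | zero => rfl
    | succ k ih =>
      simp only [hC, Function.iterate_succ_apply'] at *
      rw [hFH, ih]
  -- convergence in the NonemptyCompacts metric
  have hdist : Tendsto (fun k => dist (C k) A') atTop (𝓝 0) := by
    convert hconv using 2 with k
    rw [NonemptyCompacts.dist_eq, hCk k]; rfl
  have hlim : Tendsto C atTop (𝓝 A') := tendsto_iff_dist_tendsto_zero.2 hdist
  have hlim2 : Tendsto (fun k => FH (C k)) atTop (𝓝 (FH A')) :=
    (hcont.tendsto A').comp hlim
  have hshift : (fun k => FH (C k)) = fun k => C (k + 1) := by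
    funext k; simp [hC, Function.iterate_succ_apply']
  have hlim3 : Tendsto (fun k => C (k + 1)) atTop (𝓝 A') :=
    hlim.comp (tendsto_add_atTop_nat 1)
  have hFA' : FH A' = A' := tendsto_nhds_unique (hshift ▸ hlim2) hlim3
  have hFA : F A = A := by
    have := congrArg (fun s : NonemptyCompacts X => (s : Set X)) hFA'
    simp only [hFH] at this; exact this
  -- edist finiteness for the iterates
  have hne : ∀ k, EMetric.hausdorffEdist (F^[k] B) A ≠ ⊤ := fun k => by
    rw [show F^[k] B = ((C k : Set X)) from (hCk k).symm]
    exact hausdorffEdist_ne_top_of_nonempty_of_bounded (C k).nonempty hA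
      (C k).isCompact.isBounded hAc.isBounded
  -- Atilde = A
  have hAeq : Atilde = A := by
    rw [hAtilde]
    apply Set.Subset.antisymm
    · intro x hx
      have hx1 : x ∈ closure (⋃ k ≥ 1, F^[k] B) := by
        have := Set.mem_iInter.1 hx 1
        simpa using Set.mem_iInter.1 this le_rfl
      -- show infDist x A ≤ ε for all ε > 0
      have key : ∀ ε > 0, infDist x A ≤ ε := by
        intro ε hε
        obtain ⟨K, hK⟩ := (Metric.tendsto_atTop.1 hconv ε hε)
        have hxK : x ∈ closure (⋃ k ≥ max K 1, F^[k] B) := by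
          have := Set.mem_iInter.1 hx (max K 1)
          simpa using Set.mem_iInter.1 this (le_max_right K 1)
        have hsub : (⋃ k ≥ max K 1, F^[k] B) ⊆ {y | infDist y A ≤ ε} := by
          intro y hy
          simp only [Set.mem_iUnion] at hy
          obtain ⟨k, hk, hyk⟩ := hy
          have hd := hK k (le_trans (le_max_left K 1) hk)
          rw [Real.dist_eq, sub_zero, abs_of_nonneg hausdorffDist_nonneg] at hd
          exact le_trans (infDist_le_hausdorffDist_of_mem hyk (hne k)) hd.le
        have hclosed : IsClosed {y : X | infDist y A ≤ ε} :=
          isClosed_le (continuous_infDist_pt A) continuous_const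
        exact (closure_minimal hsub hclosed) hxK
      have h0 : infDist x A ≤ 0 := le_of_forall_gt_imp_ge_of_dense (by
        intro ε hε; exact key ε hε)
      have : infDist x A = 0 := le_antisymm h0 infDist_nonneg
      have := (mem_closure_iff_infDist_zero hA).2 this
      rwa [hAc.isClosed.closure_eq] at this
    · intro a ha
      simp only [Set.mem_iInter]
      intro K hK
      rw [Metric.mem_closure_iff]
      intro ε hε
      obtain ⟨k₀, hk₀⟩ := (Metric.tendsto_atTop.1 hconv ε hε)
      set k := max k₀ K with hk
      have hd := hk₀ k (le_max_left _ _)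
      rw [Real.dist_eq, sub_zero, abs_of_nonneg hausdorffDist_nonneg] at hd
      have hd' : hausdorffDist A (F^[k] B) < ε := by rwa [hausdorffDist_comm] at hd
      obtain ⟨y, hy, hdy⟩ := exists_dist_lt_of_hausdorffDist_lt ha hd'
        (by rw [EMetric.hausdorffEdist_comm]; exact hne k)
      refine ⟨y, ?_, hdy⟩
      simp only [Set.mem_iUnion]
      exact ⟨k, le_max_right _ _, hy⟩
  rw [hAeq]
  exact ⟨hA, hAc, hFA⟩
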